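/- Let (X,d) be a metric space and f : X → ℝ a bounded continuous function with sup f = M < 1. Then Sf(y) := inf_{x ∈ X} { 1 − cos²(d_{π/2}(x,y)) / (1 − f(x)) } is bounded and continuous with sup Sf < 1; in fact Sf is Lipschitz: |Sf(y) − Sf(y′)| ≤ 2 d_{π/2}(y,y′)/(1 − M) for all y, y′ ∈ X. -/
import Mathlib


open Real

lemma abs_cos_sub_cos_le' (a b : ℝ) : |Real.cos a - Real.cos b| ≤ |a - b| := by
  rw [Real.cos_sub_cos]
  rw [abs_mul, abs_mul]
  have h1 : |Real.sin ((a + b) / 2)| ≤ 1 := Real.abs_sin_le_one _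
  have h2 : |Real.sin ((a - b) / 2)| ≤ |(a - b) / 2| := Real.abs_sin_le_abs
  have h3 : |(-2 : ℝ)| = 2 := by norm_num
  rw [h3]
  calc 2 * |Real.sin ((a + b) / 2)| * |Real.sin ((a - b) / 2)|
      ≤ 2 * 1 * |(a - b) / 2| := by
        apply mul_le_mul _ h2 (abs_nonneg _) (by norm_num)
        nlinarith [abs_nonneg (Real.sin ((a + b) / 2))]
    _ = |a - b| := by rw [abs_div, abs_two]; ring

lemma abs_min_sub_min_le' (a b c : ℝ) : |min a c - min b c| ≤ |a - b| := by
  rcases le_total a c with h1 | h1 <;> rcases le_total b c with h2 | h2 <;>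
    simp [min_eq_left, min_eq_right, h1, h2, abs_le] <;>
    cases abs_le.mp (le_refl |a - b|) <;>
    constructor <;> cases abs_cases (a - b) <;> linarith

/-- `Sf(y) = inf_{x ∈ X} (1 − cos²(d_{π/2}(x,y))/(1−f(x)))`, for `sup f < 1`. -/
noncomputable def Stransform {X : Type*} [MetricSpace X] (f : X → ℝ) (y : X) : ℝ :=
  ⨅ x : X, (1 - Real.cos (min (dist x y) (π / 2)) ^ 2 / (1 - f x))

theorem Stransform_bounded_continuous_lipschitz {X : Type*} [MetricSpace X]
    (f : X → ℝ) (M : ℝ) (hc : Continuous f) (hb : ∃ C, ∀ x, |f x| ≤ C)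
    (hM : IsLUB (Set.range f) M) (hM1 : M < 1) :
    (∃ C, ∀ y, |Stransform f y| ≤ C) ∧
    Continuous (Stransform f) ∧
    (∃ c < (1 : ℝ), ∀ y, Stransform f y ≤ c) ∧
    (∀ y y' : X, |Stransform f y - Stransform f y'| ≤
      2 * min (dist y y') (π / 2) / (1 - M)) := by
  rcases isEmpty_or_nonempty X with hX | hX
  · refine ⟨⟨0, fun y => (IsEmpty.false y).elim⟩,
      continuous_of_const (fun a => (IsEmpty.false a).elim),
      ⟨0, by norm_num, fun y => (IsEmpty.false y).elim⟩,
      fun y => (IsEmpty.false y).elim⟩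
  set g : X → X → ℝ := fun x y => 1 - Real.cos (min (dist x y) (π / 2)) ^ 2 / (1 - f x)
    with hg
  have hpi : (0:ℝ) ≤ π / 2 := by positivity
  have h1M : (0:ℝ) < 1 - M := by linarith
  have hfM : ∀ x, f x ≤ M := fun x => hM.1 ⟨x, rfl⟩
  have hden : ∀ x, 1 - M ≤ 1 - f x := fun x => by linarith [hfM x]
  have hdpos : ∀ x, (0:ℝ) < 1 - f x := fun x => lt_of_lt_of_le h1M (hden x)
  have hcos_sq_le : ∀ t : ℝ, Real.cos t ^ 2 ≤ 1 := fun t => Real.cos_sq_le_one t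
  -- bounds on g
  have hg_le1 : ∀ x y, g x y ≤ 1 := by
    intro x y
    have : 0 ≤ Real.cos (min (dist x y) (π / 2)) ^ 2 / (1 - f x) :=
      div_nonneg (sq_nonneg _) (hdpos x).le
    simp only [hg]; linarith
  have hg_lb : ∀ x y, 1 - 1 / (1 - M) ≤ g x y := by
    intro x y
    have : Real.cos (min (dist x y) (π / 2)) ^ 2 / (1 - f x) ≤ 1 / (1 - M) :=
      div_le_div₀ (by positivity) (hcos_sq_le _) h1M (hden x)
    simp only [hg]; linarith
  have hbdd : ∀ y, BddBelow (Set.range fun x => g x y) := by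
    intro y
    exact ⟨1 - 1 / (1 - M), by rintro _ ⟨x, rfl⟩; exact hg_lb x y⟩
  have hS_eq : ∀ y, Stransform f y = ⨅ x, g x y := fun y => rfl
  have hS_le : ∀ x y, Stransform f y ≤ g x y := by
    intro x y; rw [hS_eq]; exact ciInf_le (hbdd y) x
  have hS_lb : ∀ y, 1 - 1 / (1 - M) ≤ Stransform f y := by
    intro y; rw [hS_eq]; exact le_ciInf fun x => hg_lb x y
  have hS_le1 : ∀ y, Stransform f y ≤ 1 := fun y =>
    (hS_le (Classical.arbitrary X) y).trans (hg_le1 _ y)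
  -- key pointwise Lipschitz estimate
  have hkey : ∀ x y y', g x y ≤ g x y' + 2 * min (dist y y') (π / 2) / (1 - M) := by
    intro x y y'
    set a := min (dist x y) (π / 2) with ha
    set b := min (dist x y') (π / 2) with hbdef
    set m := min (dist y y') (π / 2) with hm
    have hm0 : 0 ≤ m := le_min dist_nonneg hpi
    have ha0 : 0 ≤ a := le_min dist_nonneg hpi
    have hb0 : 0 ≤ b := le_min dist_nonneg hpi
    have hale : a ≤ π / 2 := min_le_right _ _
    have hble : b ≤ π / 2 := min_le_right _ _
    have habm : |a - b| ≤ m := by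
      refine le_min ?_ ?_
      · calc |a - b| ≤ |dist x y - dist x y'| := abs_min_sub_min_le' _ _ _
          _ ≤ dist y y' := by
              rw [dist_comm x y, dist_comm x y']
              exact abs_dist_sub_le y y' x
      · rw [abs_le]; constructor <;> linarith
    have hcos2 : Real.cos b ^ 2 - Real.cos a ^ 2 ≤ 2 * m := by
      have h1 : |Real.cos b - Real.cos a| ≤ |b - a| := abs_cos_sub_cos_le' b a
      have h2 : |Real.cos b + Real.cos a| ≤ 2 := by
        calc |Real.cos b + Real.cos a| ≤ |Real.cos b| + |Real.cos a| := abs_add_le _ _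
          _ ≤ 2 := by linarith [Real.abs_cos_le_one b, Real.abs_cos_le_one a]
      have h3 : |b - a| ≤ m := by rwa [abs_sub_comm]
      calc Real.cos b ^ 2 - Real.cos a ^ 2
          = (Real.cos b - Real.cos a) * (Real.cos b + Real.cos a) := by ring
        _ ≤ |(Real.cos b - Real.cos a) * (Real.cos b + Real.cos a)| := le_abs_self _
        _ = |Real.cos b - Real.cos a| * |Real.cos b + Real.cos a| := abs_mul _ _
        _ ≤ m * 2 := mul_le_mul (h1.trans h3) h2 (abs_nonneg _) hm0
        _ = 2 * m := by ring
    have hdiv : (Real.cos b ^ 2 - Real.cos a ^ 2) / (1 - f x) ≤ 2 * m / (1 - M) := by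
      rcases le_or_gt (Real.cos b ^ 2) (Real.cos a ^ 2) with h | h
      · have : (Real.cos b ^ 2 - Real.cos a ^ 2) / (1 - f x) ≤ 0 :=
          div_nonpos_of_nonpos_of_nonneg (by linarith) (hdpos x).le
        have : (0:ℝ) ≤ 2 * m / (1 - M) := by positivity
        linarith
      · exact div_le_div₀ (by positivity) hcos2 h1M (hden x)
    have hsub : (Real.cos b ^ 2 - Real.cos a ^ 2) / (1 - f x)
        = Real.cos b ^ 2 / (1 - f x) - Real.cos a ^ 2 / (1 - f x) := sub_div _ _ _
    simp only [hg]
    rw [hsub] at hdiv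
    linarith
  -- one-sided Lipschitz for Stransform
  have hlip1 : ∀ y y', Stransform f y - Stransform f y'
      ≤ 2 * min (dist y y') (π / 2) / (1 - M) := by
    intro y y'
    have : Stransform f y - 2 * min (dist y y') (π / 2) / (1 - M) ≤ Stransform f y' := by
      rw [hS_eq y']
      refine le_ciInf fun x => ?_
      show Stransform f y - 2 * min (dist y y') (π / 2) / (1 - M) ≤ g x y'
      exact sub_le_iff_le_add.mpr ((hS_le x y).trans (hkey x y y'))
    exact sub_le_comm.mp this
  have hlip : ∀ y y' : X, |Stransform f y - Stransform f y'| ≤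
      2 * min (dist y y') (π / 2) / (1 - M) := by
    intro y y'
    rw [abs_le]
    constructor
    · have := hlip1 y' y
      rw [dist_comm y' y] at this
      linarith
    · exact hlip1 y y'
  refine ⟨⟨1 + 1 / (1 - M), fun y => ?_⟩, ?_, ?_, hlip⟩
  · have h1 := hS_lb y
    have h2 := hS_le1 y
    have h3 : (0:ℝ) < 1 / (1 - M) := by positivity
    rw [abs_le]; constructor <;> linarith
  · -- continuity via Lipschitz
    refine (LipschitzWith.of_dist_le_mul (K := (2 / (1 - M)).toNNReal)
      (f := Stransform f) fun y y' => ?_).continuous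
    rw [Real.dist_eq]
    calc |Stransform f y - Stransform f y'| ≤ 2 * min (dist y y') (π / 2) / (1 - M) :=
          hlip y y'
      _ ≤ 2 * dist y y' / (1 - M) :=
          (div_le_div_iff_of_pos_right h1M).mpr
            (by linarith [min_le_left (dist y y') (π / 2)])
      _ = ((2 / (1 - M)).toNNReal : ℝ) * dist y y' := by
          rw [Real.coe_toNNReal _ (by positivity : (0:ℝ) ≤ 2 / (1 - M))]
          ring
  · -- sup < 1
    obtain ⟨C, hC⟩ := hb
    have hC0 : 0 ≤ C := (abs_nonneg _).trans (hC (Classical.arbitrary X))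
    have hCpos : (0:ℝ) < 1 + C := by linarith
    refine ⟨1 - 1 / (1 + C), by simp [hCpos], fun y => ?_⟩
    have hgyy : g y y = 1 - 1 / (1 - f y) := by
      simp only [hg, dist_self, min_eq_left hpi, Real.cos_zero, one_pow]
    have h1 : Stransform f y ≤ 1 - 1 / (1 - f y) := by
      rw [← hgyy]; exact hS_le y y
    have h2 : 1 / (1 + C) ≤ 1 / (1 - f y) := by
      apply one_div_le_one_div_of_le (hdpos y)
      have := abs_le.mp (hC y)
      linarith [this.1]
    linarith
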